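/- For all complex numbers s and t, the exponential generating function of the Laplace polynomials P_k is Σ_{k=0}^{∞} P_k(t) · s^k / k! = exp(st + s²/2), the series converging absolutely for all s and t. -/

import Mathlib

open Polynomial

/-- The Laplace polynomials `P_k`, over `ℂ`. -/
noncomputable def laplaceP : ℕ → Polynomial ℂ
  | 0 => 1
  | k + 1 => X * laplaceP k + derivative (laplaceP k)

private lemma lp_hasDerivAt (t z : ℂ) :
    HasDerivAt (fun z : ℂ => Complex.exp (z * t + z ^ 2 / 2))
      ((t + z) * Complex.exp (z * t + z ^ 2 / 2)) z := by
  have h : HasDerivAt (fun z : ℂ => z * t + z ^ 2 / 2) (t + z) z := by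
    have h1 : HasDerivAt (fun z : ℂ => z * t) t z := by simpa using (hasDerivAt_id z).mul_const t
    have h2 : HasDerivAt (fun z : ℂ => z ^ 2 / 2) z z := by
      simpa using (hasDerivAt_pow 2 z).div_const 2
    exact h1.add h2
  simpa [mul_comm] using h.cexp

private lemma lp_iteratedDeriv (t : ℂ) (k : ℕ) :
    iteratedDeriv k (fun z : ℂ => Complex.exp (z * t + z ^ 2 / 2)) =
      fun z : ℂ => (laplaceP k).eval (t + z) * Complex.exp (z * t + z ^ 2 / 2) := by
  induction k with
  | zero => simp [laplaceP]
  | succ k ih =>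
    rw [iteratedDeriv_succ, ih]
    funext z
    have hp : HasDerivAt (fun z : ℂ => (laplaceP k).eval (t + z))
        ((derivative (laplaceP k)).eval (t + z)) z := by
      have h1 : HasDerivAt (fun z : ℂ => t + z) 1 z := by
        simpa using (hasDerivAt_id z).const_add t
      simpa [Function.comp_def] using ((laplaceP k).hasDerivAt (t + z)).comp z h1
    have := (hp.mul (lp_hasDerivAt t z)).deriv
    simp only [Pi.mul_def] at this; rw [this]
    simp only [laplaceP, eval_add, eval_mul, eval_X]
    ring

/-- For all complex `s` and `t`, the series `Σ_k P_k(t)·s^k/k!` converges absolutely and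
its sum is `exp(st + s²/2)`. -/
theorem laplaceP_genFun (s t : ℂ) :
    Summable (fun k : ℕ => ‖(laplaceP k).eval t * s ^ k / (k.factorial : ℂ)‖) ∧
      HasSum (fun k : ℕ => (laplaceP k).eval t * s ^ k / (k.factorial : ℂ))
        (Complex.exp (s * t + s ^ 2 / 2)) := by
  have hdiff : Differentiable ℂ (fun z : ℂ => Complex.exp (z * t + z ^ 2 / 2)) :=
    fun z => (lp_hasDerivAt t z).differentiableAt
  have key : ∀ u : ℂ, HasSum (fun k : ℕ => (laplaceP k).eval t * u ^ k / (k.factorial : ℂ))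
      (Complex.exp (u * t + u ^ 2 / 2)) := by
    intro u
    have h := Complex.hasSum_taylorSeries_of_entire hdiff 0 u
    have heq : ∀ k : ℕ, ((k.factorial : ℂ))⁻¹ • (u - 0) ^ k •
        iteratedDeriv k (fun z : ℂ => Complex.exp (z * t + z ^ 2 / 2)) 0
        = (laplaceP k).eval t * u ^ k / (k.factorial : ℂ) := by
      intro k
      rw [lp_iteratedDeriv t k]
      simp only [smul_eq_mul, sub_zero]
      simp [Complex.exp_zero, div_eq_mul_inv]
      ring
    rw [funext heq] at h
    exact h
  refine ⟨?_, key s⟩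
  -- summability: compare with series at 2s
  have h2 := (key (2 * s)).summable
  have htend := h2.tendsto_atTop_zero
  have hbdd : ∃ C : ℝ, ∀ k : ℕ,
      ‖(laplaceP k).eval t * (2 * s) ^ k / (k.factorial : ℂ)‖ ≤ C := by
    have := htend.norm.bddAbove_range
    obtain ⟨C, hC⟩ := this
    exact ⟨C, fun k => hC ⟨k, rfl⟩⟩
  obtain ⟨C, hC⟩ := hbdd
  have hle : ∀ k : ℕ, ‖(laplaceP k).eval t * s ^ k / (k.factorial : ℂ)‖ ≤ C * (1/2) ^ k := by
    intro k
    have hrw : (laplaceP k).eval t * (2 * s) ^ k / (k.factorial : ℂ)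
        = (2 : ℂ) ^ k * ((laplaceP k).eval t * s ^ k / (k.factorial : ℂ)) := by
      rw [mul_pow]; ring
    have h := hC k
    rw [hrw, norm_mul] at h
    have h2k : ‖(2 : ℂ) ^ k‖ = (2 : ℝ) ^ k := by
      rw [norm_pow]; norm_num
    rw [h2k] at h
    calc ‖(laplaceP k).eval t * s ^ k / (k.factorial : ℂ)‖
        = (2 : ℝ) ^ k * ‖(laplaceP k).eval t * s ^ k / (k.factorial : ℂ)‖ * (1/2) ^ k := by
          rw [mul_comm ((2:ℝ)^k), mul_assoc, ← mul_pow]; norm_num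
      _ ≤ C * (1/2) ^ k := by
          apply mul_le_mul_of_nonneg_right h (by positivity)
  exact Summable.of_nonneg_of_le (fun k => norm_nonneg _) hle
    ((summable_geometric_of_lt_one (by norm_num) (by norm_num)).mul_left C)
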